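/- Let 𝓜 be a nonsingular real r×r matrix. Then E_r(𝓜; u), defined by E_r(𝓜; u) = ∫_{ℝ^r} e^{-π(u-u')ᵀ(u-u')} ∏_{j=1}^r sign((𝓜ᵀu')_j) d^r u', satisfies the Vignéras equation with λ = 0: ∑_{j=1}^r (∂²_{u_j} + 2π u_j ∂_{u_j}) E_r(𝓜; u) = 0 for all u ∈ ℝ^r. -/

import Mathlib

set_option maxHeartbeats 1000000
open MeasureTheory Matrix Real

lemma mul_exp_le {c z : ℝ} (hc : 0 < c) (hz : 0 ≤ z) : z * Real.exp (-(c * z)) ≤ 1 / c := by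
  have h := Real.add_one_le_exp (c * z / 2)
  have h2 : Real.exp (c * z / 2) ^ 2 = Real.exp (c * z) := by
    rw [← Real.exp_nat_mul]; ring_nf
  have h3 : c * z ≤ Real.exp (c * z) := by nlinarith [Real.exp_pos (c * z / 2)]
  rw [Real.exp_neg]
  rw [div_eq_mul_inv, one_mul]
  calc z * (Real.exp (c*z))⁻¹ ≤ (Real.exp (c*z) / c) * (Real.exp (c*z))⁻¹ := by
        apply mul_le_mul_of_nonneg_right _ (by positivity)
        rw [le_div_iff₀ hc]; linarith [h3]
      _ = c⁻¹ * (Real.exp (c*z) * (Real.exp (c*z))⁻¹) := by ring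
      _ = c⁻¹ := by rw [mul_inv_cancel₀ (Real.exp_pos _).ne', mul_one]

-- Gaussian integrability on pi space
lemma integrable_gauss {r : ℕ} {c : ℝ} (hc : 0 < c) (v : Fin r → ℝ) :
    Integrable (fun x : Fin r → ℝ => Real.exp (-c * ∑ k, (v k - x k) ^ 2)) := by
  have : (fun x : Fin r → ℝ => Real.exp (-c * ∑ k, (v k - x k) ^ 2))
      = fun x : Fin r → ℝ => ∏ k, Real.exp (-c * (v k - x k) ^ 2) := by
    ext x
    rw [← Real.exp_sum]
    congr 1
    rw [Finset.mul_sum]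
  rw [this]
  apply Integrable.fintype_prod (f := fun k (t : ℝ) => Real.exp (-c * (v k - t) ^ 2))
  intro i
  have h1 : Integrable (fun t : ℝ => Real.exp (-c * t ^ 2)) := integrable_exp_neg_mul_sq hc
  have h2 : Integrable (fun t : ℝ => Real.exp (-c * (t - v i) ^ 2)) := by
    simpa using h1.comp_sub_right (v i)
  apply h2.congr
  filter_upwards with t
  ring_nf

lemma integrable_gauss' {r : ℕ} {c : ℝ} (hc : 0 < c) :
    Integrable (fun x : Fin r → ℝ => Real.exp (-c * ∑ k, x k ^ 2)) := by
  have := integrable_gauss hc (fun _ : Fin r => 0)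
  simpa using this

/-- Main parametric differentiation lemma. -/
lemma key {r : ℕ} (g : (Fin r → ℝ) → ℝ) (hg : Measurable g) (hgb : ∀ x, |g x| ≤ 1)
    (a a' : ℝ → Fin r → ℝ) (b b' α α' : ℝ → ℝ) (β : Fin r → ℝ)
    (t₀ ε A : ℝ) (hε : 0 < ε) (hA : 1 ≤ A)
    (hd : ∀ t ∈ Metric.ball t₀ ε, (∀ k, HasDerivAt (fun s => a s k) (a' t k) t)
        ∧ HasDerivAt b (b' t) t ∧ HasDerivAt α (α' t) t)
    (hbnd : ∀ t ∈ Metric.ball t₀ ε, (∀ k, |a t k| ≤ A ∧ |a' t k| ≤ A)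
        ∧ |b t| ≤ 2 ∧ |b' t| ≤ 2 ∧ 1/2 ≤ |b t| ∧ |α t| ≤ A ∧ |α' t| ≤ A)
    (hβ : ∀ k, |β k| ≤ A) :
    Integrable (fun x : Fin r → ℝ =>
      (α' t₀ + (α t₀ + ∑ k, β k * x k) *
        (-Real.pi * ∑ k, 2 * (a t₀ k - b t₀ * x k) * (a' t₀ k - b' t₀ * x k))) *
        Real.exp (-Real.pi * ∑ k, (a t₀ k - b t₀ * x k) ^ 2) * g x)
    ∧ HasDerivAt (fun t => ∫ x : Fin r → ℝ,
        (α t + ∑ k, β k * x k) * Real.exp (-Real.pi * ∑ k, (a t k - b t * x k) ^ 2) * g x)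
      (∫ x : Fin r → ℝ,
        (α' t₀ + (α t₀ + ∑ k, β k * x k) *
          (-Real.pi * ∑ k, 2 * (a t₀ k - b t₀ * x k) * (a' t₀ k - b' t₀ * x k))) *
          Real.exp (-Real.pi * ∑ k, (a t₀ k - b t₀ * x k) ^ 2) * g x) t₀ := by
  have pi_pos := Real.pi_pos
  have pi_le := Real.pi_le_four
  -- π is Real.pi via open Real
  set P : ℝ := A * (1 + (1 + (r : ℝ)) * (8 * π * A ^ 2 * (r : ℝ) + 16 * π)) with hP
  set C : ℝ := 144 * P * Real.exp (π * r * A ^ 2) with hC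
  have hP1 : 1 ≤ P := by
    have : (1:ℝ) ≤ 1 + (1 + (r:ℝ)) * (8 * π * A ^ 2 * (r:ℝ) + 16 * π) := by
      have : (0:ℝ) ≤ (1 + (r:ℝ)) * (8 * π * A ^ 2 * (r:ℝ) + 16 * π) := by positivity
      linarith
    nlinarith
  -- per-x quantities
  have hS0 : ∀ x : Fin r → ℝ, (0:ℝ) ≤ ∑ k, x k ^ 2 := fun x =>
    Finset.sum_nonneg fun k _ => sq_nonneg _
  -- exponent lower bound
  have hTlb : ∀ t ∈ Metric.ball t₀ ε, ∀ x : Fin r → ℝ,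
      (∑ k, x k ^ 2) / 8 - (r : ℝ) * A ^ 2 ≤ ∑ k, (a t k - b t * x k) ^ 2 := by
    intro t ht x
    obtain ⟨haa, hb2, hb'2, hbl, hα2, hα'2⟩ := hbnd t ht
    have step : ∀ k ∈ Finset.univ, x k ^ 2 / 8 - A ^ 2 ≤ (a t k - b t * x k) ^ 2 := by
      intro k _
      have h1 := (haa k).1
      have hb : (1/4 : ℝ) ≤ (b t) ^ 2 := by nlinarith [sq_abs (b t), abs_nonneg (b t)]
      have ha2 : (a t k) ^ 2 ≤ A ^ 2 := by nlinarith [sq_abs (a t k), abs_nonneg (a t k)]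
      nlinarith [sq_nonneg (2 * a t k - b t * x k), sq_nonneg (x k), sq_nonneg (b t * x k),
        mul_le_mul_of_nonneg_right hb (sq_nonneg (x k))]
    calc (∑ k, x k ^ 2) / 8 - (r:ℝ) * A ^ 2 = ∑ k : Fin r, (x k ^ 2 / 8 - A ^ 2) := by
          rw [Finset.sum_sub_distrib, ← Finset.sum_div, Finset.sum_const, Finset.card_univ,
            Fintype.card_fin]
          ring
      _ ≤ _ := Finset.sum_le_sum step
  -- exponential bound
  have hexp : ∀ t ∈ Metric.ball t₀ ε, ∀ x : Fin r → ℝ,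
      Real.exp (-π * ∑ k, (a t k - b t * x k) ^ 2) ≤
        Real.exp (π * r * A ^ 2) * Real.exp (-(π/16) * ∑ k, x k ^ 2)
          * Real.exp (-(π/16) * ∑ k, x k ^ 2) := by
    intro t ht x
    rw [← Real.exp_add, ← Real.exp_add]
    apply Real.exp_le_exp.2
    have h := hTlb t ht x
    nlinarith [mul_le_mul_of_nonneg_left h pi_pos.le]
  -- absorb polynomial
  have habsorb : ∀ x : Fin r → ℝ,
      (1 + ∑ k, x k ^ 2) ^ 2 * Real.exp (-(π/16) * ∑ k, x k ^ 2) ≤ 144 := by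
    intro x
    set S := ∑ k, x k ^ 2 with hSdef
    have hS := hS0 x
    have h1 : S * Real.exp (-(π/32 * S)) ≤ 32 / π := by
      have := mul_exp_le (c := π/32) (z := S) (by positivity) hS
      calc S * Real.exp (-(π/32 * S)) = S * Real.exp (-(π/32) * S) := by ring_nf
        _ ≤ 1 / (π/32) := by
            have := mul_exp_le (c := π/32) (z := S) (by positivity) hS
            convert this using 2; ring
        _ = 32 / π := by rw [div_div_eq_mul_div, one_mul]
    have h32 : 32 / π ≤ 11 := by
      rw [div_le_iff₀ pi_pos]
      nlinarith [Real.pi_gt_three]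
    have hexp1 : Real.exp (-(π/32 * S)) ≤ 1 := by
      apply Real.exp_le_one_iff.2; nlinarith
    have h12 : (1 + S) * Real.exp (-(π/32 * S)) ≤ 12 := by nlinarith
    have hsq : ((1 + S) * Real.exp (-(π/32 * S))) ^ 2 ≤ 144 := by
      nlinarith [mul_nonneg (by linarith : (0:ℝ) ≤ 1 + S) (Real.exp_pos (-(π/32 * S))).le]
    calc (1 + S) ^ 2 * Real.exp (-(π/16) * S)
        = ((1 + S) * Real.exp (-(π/32 * S))) ^ 2 := by
          rw [mul_pow, ← Real.exp_nat_mul]; ring_nf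
      _ ≤ 144 := hsq
  -- sum of abs bound
  have hsumx : ∀ x : Fin r → ℝ, ∑ k, |x k| ≤ ((r:ℝ) + ∑ k, x k ^ 2) / 2 := by
    intro x
    have h : ∀ k ∈ Finset.univ, |x k| ≤ (1 + x k ^ 2) / 2 := by
      intro k _
      nlinarith [sq_nonneg (|x k| - 1), sq_abs (x k), abs_nonneg (x k)]
    calc ∑ k, |x k| ≤ ∑ k : Fin r, (1 + x k ^ 2) / 2 := Finset.sum_le_sum h
      _ = ((r:ℝ) + ∑ k, x k ^ 2) / 2 := by
          rw [← Finset.sum_div, Finset.sum_add_distrib, Finset.sum_const, Finset.card_univ,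
            Fintype.card_fin]
          ring
  have hbeta : ∀ x : Fin r → ℝ, |∑ k, β k * x k| ≤ A * (((r:ℝ) + ∑ k, x k ^ 2) / 2) := by
    intro x
    calc |∑ k, β k * x k| ≤ ∑ k, |β k * x k| := Finset.abs_sum_le_sum_abs _ _
      _ ≤ ∑ k, A * |x k| := by
          apply Finset.sum_le_sum; intro k _
          rw [abs_mul]
          exact mul_le_mul_of_nonneg_right (hβ k) (abs_nonneg _)
      _ = A * ∑ k, |x k| := by rw [Finset.mul_sum]
      _ ≤ _ := mul_le_mul_of_nonneg_left (hsumx x) (by linarith)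
  -- prefactor bound for F itself
  have hA0 : (0:ℝ) ≤ A := by linarith
  have hr0 : (0:ℝ) ≤ (r:ℝ) := Nat.cast_nonneg r
  have h8π : (0:ℝ) ≤ 8 * π * A ^ 2 * (r:ℝ) := by positivity
  have h16 : (1:ℝ) ≤ 8 * π * A ^ 2 * (r:ℝ) + 16 * π := by
    nlinarith [Real.pi_gt_three]
  have hAr : A * (1 + (r:ℝ)) ≤ P := by
    have h1 : (1 + (r:ℝ)) ≤ (1 + (r:ℝ)) * (8 * π * A ^ 2 * (r:ℝ) + 16 * π) := by
      nlinarith [hr0]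
    have h2 := mul_le_mul_of_nonneg_left h1 hA0
    have e : P = A + A * ((1 + (r:ℝ)) * (8 * π * A ^ 2 * (r:ℝ) + 16 * π)) := by rw [hP]; ring
    rw [e]; linarith
  have hpref0 : ∀ t ∈ Metric.ball t₀ ε, ∀ x : Fin r → ℝ,
      |α t + ∑ k, β k * x k| ≤ P * (1 + ∑ k, x k ^ 2) ^ 2 := by
    intro t ht x
    obtain ⟨haa, hb2, hb'2, hbl, hα2, hα'2⟩ := hbnd t ht
    have hS := hS0 x
    have h1 : |α t + ∑ k, β k * x k| ≤ A + A * (((r:ℝ) + ∑ k, x k ^ 2) / 2) :=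
      (abs_add_le _ _).trans (add_le_add hα2 (hbeta x))
    have h2 : A + A * (((r:ℝ) + ∑ k, x k ^ 2) / 2) ≤ A * (1 + (r:ℝ)) * (1 + ∑ k, x k ^ 2) := by
      nlinarith [mul_nonneg hA0 hS, mul_nonneg hA0 hr0, mul_nonneg (mul_nonneg hA0 hr0) hS]
    have h3 : A * (1 + (r:ℝ)) * (1 + ∑ k, x k ^ 2) ≤ P * (1 + ∑ k, x k ^ 2) ^ 2 := by
      calc A * (1 + (r:ℝ)) * (1 + ∑ k, x k ^ 2)
          ≤ P * (1 + ∑ k, x k ^ 2) := mul_le_mul_of_nonneg_right hAr (by linarith)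
        _ ≤ P * (1 + ∑ k, x k ^ 2) ^ 2 := by
            nlinarith [mul_nonneg (mul_nonneg (by linarith : (0:ℝ) ≤ P)
              (by linarith : (0:ℝ) ≤ 1 + ∑ k, x k ^ 2)) hS]
    linarith
  -- inner sum bound
  have hinner : ∀ t ∈ Metric.ball t₀ ε, ∀ x : Fin r → ℝ,
      |∑ k, 2 * (a t k - b t * x k) * (a' t k - b' t * x k)| ≤
        8 * A ^ 2 * (r:ℝ) + 16 * ∑ k, x k ^ 2 := by
    intro t ht x
    obtain ⟨haa, hb2, hb'2, hbl, hα2, hα'2⟩ := hbnd t ht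
    have step : ∀ k ∈ Finset.univ,
        |2 * (a t k - b t * x k) * (a' t k - b' t * x k)| ≤ 8 * A ^ 2 + 16 * x k ^ 2 := by
      intro k _
      have hp : |a t k - b t * x k| ≤ A + 2 * |x k| := by
        calc |a t k - b t * x k| ≤ |a t k| + |b t * x k| := abs_sub _ _
          _ ≤ A + 2 * |x k| := by
              rw [abs_mul]
              exact add_le_add (haa k).1 (mul_le_mul_of_nonneg_right hb2 (abs_nonneg _))
      have hq : |a' t k - b' t * x k| ≤ A + 2 * |x k| := by
        calc |a' t k - b' t * x k| ≤ |a' t k| + |b' t * x k| := abs_sub _ _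
          _ ≤ A + 2 * |x k| := by
              rw [abs_mul]
              exact add_le_add (haa k).2 (mul_le_mul_of_nonneg_right hb'2 (abs_nonneg _))
      have habs : |2 * (a t k - b t * x k) * (a' t k - b' t * x k)| =
          2 * (|a t k - b t * x k| * |a' t k - b' t * x k|) := by
        rw [abs_mul, abs_mul]; simp [abs_of_nonneg]; ring
      rw [habs]
      have hpq : |a t k - b t * x k| * |a' t k - b' t * x k| ≤ (A + 2 * |x k|) ^ 2 := by
        nlinarith [abs_nonneg (a t k - b t * x k), abs_nonneg (a' t k - b' t * x k)]
      have : (A + 2 * |x k|) ^ 2 ≤ 4 * A ^ 2 + 8 * x k ^ 2 := by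
        nlinarith [sq_nonneg (A - 2 * |x k|), sq_abs (x k), abs_nonneg (x k)]
      nlinarith
    calc |∑ k, 2 * (a t k - b t * x k) * (a' t k - b' t * x k)|
        ≤ ∑ k, |2 * (a t k - b t * x k) * (a' t k - b' t * x k)| :=
          Finset.abs_sum_le_sum_abs _ _
      _ ≤ ∑ k : Fin r, (8 * A ^ 2 + 16 * x k ^ 2) := Finset.sum_le_sum step
      _ = 8 * A ^ 2 * (r:ℝ) + 16 * ∑ k, x k ^ 2 := by
          rw [Finset.sum_add_distrib, Finset.sum_const, Finset.card_univ, Fintype.card_fin,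
            ← Finset.mul_sum]
          ring
  -- prefactor bound for F'
  have hprefd : ∀ t ∈ Metric.ball t₀ ε, ∀ x : Fin r → ℝ,
      |α' t + (α t + ∑ k, β k * x k) *
        (-π * ∑ k, 2 * (a t k - b t * x k) * (a' t k - b' t * x k))| ≤
        P * (1 + ∑ k, x k ^ 2) ^ 2 := by
    intro t ht x
    obtain ⟨haa, hb2, hb'2, hbl, hα2, hα'2⟩ := hbnd t ht
    have hS := hS0 x
    set S := ∑ k, x k ^ 2 with hSdef
    have h1 : |α t + ∑ k, β k * x k| ≤ A * (1 + (r:ℝ)) * (1 + S) := by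
      have h1a : |α t + ∑ k, β k * x k| ≤ A + A * (((r:ℝ) + S) / 2) :=
        (abs_add_le _ _).trans (add_le_add hα2 (hbeta x))
      nlinarith [mul_nonneg hA0 hS, mul_nonneg hA0 hr0, mul_nonneg (mul_nonneg hA0 hr0) hS]
    have h2 : |(-π * ∑ k, 2 * (a t k - b t * x k) * (a' t k - b' t * x k))| ≤
        π * (8 * A ^ 2 * (r:ℝ) + 16 * S) := by
      rw [abs_mul, abs_neg, abs_of_pos pi_pos]
      exact mul_le_mul_of_nonneg_left (hinner t ht x) pi_pos.le
    have h3 : |α' t + (α t + ∑ k, β k * x k) *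
        (-π * ∑ k, 2 * (a t k - b t * x k) * (a' t k - b' t * x k))| ≤
        A + (A * (1 + (r:ℝ)) * (1 + S)) * (π * (8 * A ^ 2 * (r:ℝ) + 16 * S)) := by
      refine (abs_add_le _ _).trans (add_le_add hα'2 ?_)
      rw [abs_mul]
      exact mul_le_mul h1 h2 (abs_nonneg _) (by positivity)
    have h4 : π * (8 * A ^ 2 * (r:ℝ) + 16 * S) ≤
        (8 * π * A ^ 2 * (r:ℝ) + 16 * π) * (1 + S) := by
      nlinarith [mul_nonneg (mul_nonneg pi_pos.le (sq_nonneg A)) (mul_nonneg hr0 hS)]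
    have h5 : (A * (1 + (r:ℝ)) * (1 + S)) * (π * (8 * A ^ 2 * (r:ℝ) + 16 * S)) ≤
        (A * (1 + (r:ℝ)) * (1 + S)) * ((8 * π * A ^ 2 * (r:ℝ) + 16 * π) * (1 + S)) := by
      apply mul_le_mul_of_nonneg_left h4
      positivity
    have e1 : (A * (1 + (r:ℝ)) * (1 + S)) * ((8 * π * A ^ 2 * (r:ℝ) + 16 * π) * (1 + S)) =
        (A * (1 + (r:ℝ)) * (8 * π * A ^ 2 * (r:ℝ) + 16 * π)) * (1 + S) ^ 2 := by ring
    have e2 : P * (1 + S) ^ 2 =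
        A * (1 + S) ^ 2 + (A * (1 + (r:ℝ)) * (8 * π * A ^ 2 * (r:ℝ) + 16 * π)) * (1 + S) ^ 2 := by
      rw [hP]; ring
    have e3 : A ≤ A * (1 + S) ^ 2 := by
      nlinarith [mul_nonneg hA0 hS, mul_nonneg (mul_nonneg hA0 hS) hS]
    rw [e1] at h5
    linarith
  -- master bound
  have main : ∀ t ∈ Metric.ball t₀ ε, ∀ x : Fin r → ℝ, ∀ p : ℝ,
      |p| ≤ P * (1 + ∑ k, x k ^ 2) ^ 2 →
      |p * Real.exp (-π * ∑ k, (a t k - b t * x k) ^ 2) * g x| ≤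
        C * Real.exp (-(π/16) * ∑ k, x k ^ 2) := by
    intro t ht x p hp
    have hS := hS0 x
    rw [abs_mul, abs_mul, Real.abs_exp]
    have h1 := hexp t ht x
    have h2 := habsorb x
    have h3 := hgb x
    calc |p| * Real.exp (-π * ∑ k, (a t k - b t * x k) ^ 2) * |g x|
        ≤ (P * (1 + ∑ k, x k ^ 2) ^ 2) *
            (Real.exp (π * r * A ^ 2) * Real.exp (-(π/16) * ∑ k, x k ^ 2)
              * Real.exp (-(π/16) * ∑ k, x k ^ 2)) * 1 := by
          apply mul_le_mul _ h3 (abs_nonneg _) (by positivity)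
          exact mul_le_mul hp h1 (Real.exp_pos _).le (by positivity)
      _ = (Real.exp (π * r * A ^ 2) * P) *
            ((1 + ∑ k, x k ^ 2) ^ 2 * Real.exp (-(π/16) * ∑ k, x k ^ 2)) *
            Real.exp (-(π/16) * ∑ k, x k ^ 2) := by ring
      _ ≤ (Real.exp (π * r * A ^ 2) * P) * 144 * Real.exp (-(π/16) * ∑ k, x k ^ 2) := by
          apply mul_le_mul_of_nonneg_right _ (Real.exp_pos _).le
          apply mul_le_mul_of_nonneg_left h2
          positivity
      _ = C * Real.exp (-(π/16) * ∑ k, x k ^ 2) := by rw [hC]; ring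
  -- measurability
  have hmeas : ∀ t, AEStronglyMeasurable (fun x : Fin r → ℝ =>
      (α t + ∑ k, β k * x k) * Real.exp (-π * ∑ k, (a t k - b t * x k) ^ 2) * g x) volume := by
    intro t
    apply Measurable.aestronglyMeasurable
    refine Measurable.mul (Measurable.mul ?_ ?_) hg
    · exact measurable_const.add
        (Finset.measurable_sum _ fun k _ => (by fun_prop))
    · exact Real.measurable_exp.comp
        ((Finset.measurable_sum _ fun k _ =>
          (by fun_prop)).const_mul
          (-π))
  have hmeas' : AEStronglyMeasurable (fun x : Fin r → ℝ =>
      (α' t₀ + (α t₀ + ∑ k, β k * x k) *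
        (-π * ∑ k, 2 * (a t₀ k - b t₀ * x k) * (a' t₀ k - b' t₀ * x k))) *
        Real.exp (-π * ∑ k, (a t₀ k - b t₀ * x k) ^ 2) * g x) volume := by
    apply Measurable.aestronglyMeasurable
    refine Measurable.mul (Measurable.mul ?_ ?_) hg
    · apply measurable_const.add
      apply Measurable.mul
      · exact measurable_const.add
          (Finset.measurable_sum _ fun k _ => (by fun_prop))
      · apply Measurable.const_mul
        apply Finset.measurable_sum
        intro k _
        exact Measurable.mul
          (by fun_prop)
          (by fun_prop)
    · exact Real.measurable_exp.comp
        ((Finset.measurable_sum _ fun k _ =>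
          (by fun_prop)).const_mul
          (-π))
  -- bound integrable
  have hbound_int : Integrable (fun x : Fin r → ℝ => C * Real.exp (-(π/16) * ∑ k, x k ^ 2)) :=
    (integrable_gauss' (by positivity)).const_mul C
  -- integrability of F t₀
  have ht₀mem : t₀ ∈ Metric.ball t₀ ε := Metric.mem_ball_self hε
  have hFint : Integrable (fun x : Fin r → ℝ =>
      (α t₀ + ∑ k, β k * x k) * Real.exp (-π * ∑ k, (a t₀ k - b t₀ * x k) ^ 2) * g x) := by
    apply Integrable.mono' hbound_int (hmeas t₀)
    filter_upwards with x
    rw [Real.norm_eq_abs]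
    exact main t₀ ht₀mem x _ (hpref0 t₀ ht₀mem x)
  -- pointwise derivative
  have hdiff : ∀ x : Fin r → ℝ, ∀ t ∈ Metric.ball t₀ ε,
      HasDerivAt (fun t => (α t + ∑ k, β k * x k) *
          Real.exp (-π * ∑ k, (a t k - b t * x k) ^ 2) * g x)
        ((α' t + (α t + ∑ k, β k * x k) *
          (-π * ∑ k, 2 * (a t k - b t * x k) * (a' t k - b' t * x k))) *
          Real.exp (-π * ∑ k, (a t k - b t * x k) ^ 2) * g x) t := by
    intro x t ht
    obtain ⟨ha, hb, hα⟩ := hd t ht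
    have hT : HasDerivAt (fun s => ∑ k, (a s k - b s * x k) ^ 2)
        (∑ k, 2 * (a t k - b t * x k) * (a' t k - b' t * x k)) t := by
      have h : ∀ k ∈ Finset.univ, HasDerivAt (fun s => (a s k - b s * x k) ^ 2)
          (2 * (a t k - b t * x k) * (a' t k - b' t * x k)) t := by
        intro k _
        have h1 := ((ha k).fun_sub (hb.mul_const (x k))).fun_pow 2
        refine h1.congr_deriv ?_
        ring
      exact HasDerivAt.fun_sum h
    have hE : HasDerivAt (fun s => Real.exp (-π * ∑ k, (a s k - b s * x k) ^ 2))
        (Real.exp (-π * ∑ k, (a t k - b t * x k) ^ 2) *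
          (-π * ∑ k, 2 * (a t k - b t * x k) * (a' t k - b' t * x k))) t :=
      (hT.const_mul (-π)).exp
    have hpre : HasDerivAt (fun s => α s + ∑ k, β k * x k) (α' t) t := hα.add_const _
    have h := (hpre.fun_mul hE).mul_const (g x)
    refine h.congr_deriv ?_
    ring
  exact hasDerivAt_integral_of_dominated_loc_of_deriv_le (Metric.ball_mem_nhds t₀ hε)
    (Filter.Eventually.of_forall fun t => hmeas t) hFint hmeas'
    (Filter.Eventually.of_forall fun x t ht => by
      rw [Real.norm_eq_abs]; exact main t ht x _ (hprefd t ht x))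
    hbound_int
    (Filter.Eventually.of_forall fun x t ht => hdiff x t ht)

lemma measurable_rsign : Measurable Real.sign := by
  unfold Real.sign
  exact measurable_const.ite (measurableSet_lt measurable_id measurable_const)
    (measurable_const.ite (measurableSet_lt measurable_const measurable_id) measurable_const)

lemma abs_rsign_le_one (y : ℝ) : |Real.sign y| ≤ 1 := by
  rcases Real.sign_apply_eq y with h | h | h <;> rw [h] <;> norm_num

lemma rsign_pos_mul {c : ℝ} (hc : 0 < c) (y : ℝ) : Real.sign (c * y) = Real.sign y := by
  rcases lt_trichotomy y 0 with h | h | h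
  · rw [Real.sign_of_neg h, Real.sign_of_neg (by nlinarith)]
  · simp [h, Real.sign_zero]
  · rw [Real.sign_of_pos h, Real.sign_of_pos (by positivity)]

/-- Product of signs. -/
noncomputable def sgn {r : ℕ} (M : Matrix (Fin r) (Fin r) ℝ) (x : Fin r → ℝ) : ℝ :=
  ∏ j, Real.sign (Mᵀ.mulVec x j)

lemma sgn_meas {r : ℕ} (M : Matrix (Fin r) (Fin r) ℝ) : Measurable (sgn M) := by
  apply Finset.measurable_prod
  intro j _
  apply measurable_rsign.comp
  have : (fun x : Fin r → ℝ => Mᵀ.mulVec x j) = fun x => ∑ k, Mᵀ j k * x k := rfl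
  rw [this]
  exact Finset.measurable_sum _ fun k _ => (measurable_pi_apply k).const_mul _

lemma sgn_abs_le {r : ℕ} (M : Matrix (Fin r) (Fin r) ℝ) (x : Fin r → ℝ) : |sgn M x| ≤ 1 := by
  unfold sgn
  rw [Finset.abs_prod]
  apply Finset.prod_le_one (fun j _ => abs_nonneg _) (fun j _ => abs_rsign_le_one _)

lemma sgn_smul {r : ℕ} (M : Matrix (Fin r) (Fin r) ℝ) {c : ℝ} (hc : 0 < c) (x : Fin r → ℝ) :
    sgn M (c • x) = sgn M x := by
  unfold sgn
  apply Finset.prod_congr rfl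
  intro j _
  rw [Matrix.mulVec_smul]
  simp only [Pi.smul_apply, smul_eq_mul]
  exact rsign_pos_mul hc _

/-- The `r`-tuple error function. -/
noncomputable def Efun {ι : Type*} [Fintype ι] (M : Matrix ι ι ℝ) (u : ι → ℝ) : ℝ :=
  ∫ u' : ι → ℝ, Real.exp (-Real.pi * ∑ j, (u j - u' j) ^ 2) *
    ∏ j, Real.sign (Mᵀ.mulVec u' j)

/-- Partial derivative of a function on `ℝ^ι` in the `j`-th coordinate. -/
noncomputable def pderiv {ι : Type*} [Fintype ι] [DecidableEq ι]
    (j : ι) (f : (ι → ℝ) → ℝ) (u : ι → ℝ) : ℝ :=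
  deriv (fun t => f (Function.update u j t)) (u j)

lemma hasDerivAt_Efun {r : ℕ} (M : Matrix (Fin r) (Fin r) ℝ) (w : Fin r → ℝ) (j : Fin r) :
    Integrable (fun x : Fin r → ℝ =>
      (-(2*π) * (w j - x j)) * (Real.exp (-π * ∑ k, (w k - x k)^2) * sgn M x))
    ∧ HasDerivAt (fun t => Efun M (Function.update w j t))
      (∫ x : Fin r → ℝ, (-(2*π) * (w j - x j)) *
        (Real.exp (-π * ∑ k, (w k - x k)^2) * sgn M x)) (w j) := by
  have pi_pos := Real.pi_pos
  have hSw : (0:ℝ) ≤ ∑ k, |w k| := Finset.sum_nonneg fun k _ => abs_nonneg _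
  have hwk : ∀ k, |w k| ≤ ∑ k, |w k| := fun k =>
    Finset.single_le_sum (fun k _ => abs_nonneg (w k)) (Finset.mem_univ k)
  have hA : (1:ℝ) ≤ (3 + 2*π) * (1 + ∑ k, |w k|) := by nlinarith
  have hd : ∀ t ∈ Metric.ball (w j) 1,
      (∀ k, HasDerivAt (fun s => Function.update w j s k) ((fun t k => if k = j then (1:ℝ) else 0) t k) t)
      ∧ HasDerivAt (fun _ => (1:ℝ)) ((fun _ => (0:ℝ)) t) t
      ∧ HasDerivAt (fun _ => (1:ℝ)) ((fun _ => (0:ℝ)) t) t := by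
    intro t _
    refine ⟨fun k => ?_, hasDerivAt_const _ _, hasDerivAt_const _ _⟩
    by_cases hk : k = j
    · subst hk
      simp only [if_pos rfl, Function.update_self]
      exact hasDerivAt_id t
    · simp only [if_neg hk, Function.update_of_ne hk]
      exact hasDerivAt_const _ _
  have hbnd : ∀ t ∈ Metric.ball (w j) 1,
      (∀ k, |Function.update w j t k| ≤ (3 + 2*π) * (1 + ∑ k, |w k|) ∧
        |(fun t k => if k = j then (1:ℝ) else 0) t k| ≤ (3 + 2*π) * (1 + ∑ k, |w k|))
      ∧ |(1:ℝ)| ≤ 2 ∧ |(0:ℝ)| ≤ 2 ∧ (1:ℝ)/2 ≤ |(1:ℝ)| ∧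
        |(1:ℝ)| ≤ (3 + 2*π) * (1 + ∑ k, |w k|) ∧ |(0:ℝ)| ≤ (3 + 2*π) * (1 + ∑ k, |w k|) := by
    intro t ht
    rw [Metric.mem_ball, Real.dist_eq] at ht
    refine ⟨fun k => ⟨?_, ?_⟩, by norm_num, by norm_num, by norm_num,
      by rw [abs_one]; exact hA, by rw [abs_zero]; linarith⟩
    · by_cases hk : k = j
      · subst hk
        rw [Function.update_self]
        have h1 : |t| ≤ |w k| + 1 := by
          have := abs_sub_abs_le_abs_sub t (w k)
          linarith
        nlinarith [hwk k, abs_nonneg (w k)]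
      · rw [Function.update_of_ne hk]
        nlinarith [hwk k, abs_nonneg (w k)]
    · simp only []
      by_cases hk : k = j <;> simp [hk] <;> nlinarith
  have hβ : ∀ k : Fin r, |(fun _ : Fin r => (0:ℝ)) k| ≤ (3 + 2*π) * (1 + ∑ k, |w k|) := by
    intro k; rw [abs_zero]; linarith
  have h := key (sgn M) (sgn_meas M) (sgn_abs_le M)
    (fun t k => Function.update w j t k) (fun t k => if k = j then (1:ℝ) else 0)
    (fun _ => 1) (fun _ => 0) (fun _ => 1) (fun _ => 0) (fun _ => 0)
    (w j) 1 ((3 + 2*π) * (1 + ∑ k, |w k|)) one_pos hA hd hbnd hβ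
  have hptw : ∀ x : Fin r → ℝ,
      ((fun _ => (0:ℝ)) (w j) + ((fun _ => (1:ℝ)) (w j) + ∑ k, (fun _ : Fin r => (0:ℝ)) k * x k) *
        (-π * ∑ k, 2 * (Function.update w j (w j) k - (fun _ => (1:ℝ)) (w j) * x k) *
          ((if k = j then (1:ℝ) else 0) - (fun _ => (0:ℝ)) (w j) * x k))) *
        Real.exp (-π * ∑ k, (Function.update w j (w j) k - (fun _ => (1:ℝ)) (w j) * x k) ^ 2) * sgn M x
      = (-(2*π) * (w j - x j)) * (Real.exp (-π * ∑ k, (w k - x k)^2) * sgn M x) := by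
    intro x
    simp only [Function.update_eq_self, zero_mul, Finset.sum_const_zero, add_zero, one_mul,
      sub_zero, mul_ite, mul_one, mul_zero, Finset.sum_ite_eq', Finset.mem_univ, if_true, zero_add]
    ring
  have hfun : (fun t => ∫ x : Fin r → ℝ,
      ((fun _ => (1:ℝ)) t + ∑ k, (fun _ : Fin r => (0:ℝ)) k * x k) *
        Real.exp (-π * ∑ k, (Function.update w j t k - (fun _ => (1:ℝ)) t * x k) ^ 2) * sgn M x)
      = fun t => Efun M (Function.update w j t) := by
    funext t
    unfold Efun sgn
    congr 1
    funext x
    simp only [zero_mul, Finset.sum_const_zero, add_zero, one_mul]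
  have hval : (∫ x : Fin r → ℝ,
      ((fun _ => (0:ℝ)) (w j) + ((fun _ => (1:ℝ)) (w j) + ∑ k, (fun _ : Fin r => (0:ℝ)) k * x k) *
        (-π * ∑ k, 2 * (Function.update w j (w j) k - (fun _ => (1:ℝ)) (w j) * x k) *
          ((if k = j then (1:ℝ) else 0) - (fun _ => (0:ℝ)) (w j) * x k))) *
        Real.exp (-π * ∑ k, (Function.update w j (w j) k - (fun _ => (1:ℝ)) (w j) * x k) ^ 2) * sgn M x)
      = ∫ x : Fin r → ℝ, (-(2*π) * (w j - x j)) * (Real.exp (-π * ∑ k, (w k - x k)^2) * sgn M x) := by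
    congr 1
    funext x
    exact hptw x
  constructor
  · exact h.1.congr (Filter.Eventually.of_forall hptw)
  · have h2 := h.2
    rw [hfun, hval] at h2
    exact h2

lemma pderiv_Efun {r : ℕ} (M : Matrix (Fin r) (Fin r) ℝ) (w : Fin r → ℝ) (j : Fin r) :
    pderiv j (Efun M) w = ∫ x : Fin r → ℝ,
      (-(2*π) * (w j - x j)) * (Real.exp (-π * ∑ k, (w k - x k)^2) * sgn M x) := by
  unfold pderiv
  exact (hasDerivAt_Efun M w j).2.deriv

lemma hasDerivAt2_Efun {r : ℕ} (M : Matrix (Fin r) (Fin r) ℝ) (u : Fin r → ℝ) (j : Fin r) :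
    Integrable (fun x : Fin r → ℝ =>
      (-(2*π) + 4*π^2*(u j - x j)^2) * (Real.exp (-π * ∑ k, (u k - x k)^2) * sgn M x))
    ∧ HasDerivAt (fun t => pderiv j (Efun M) (Function.update u j t))
      (∫ x : Fin r → ℝ, (-(2*π) + 4*π^2*(u j - x j)^2) *
        (Real.exp (-π * ∑ k, (u k - x k)^2) * sgn M x)) (u j) := by
  have pi_pos := Real.pi_pos
  have hSw : (0:ℝ) ≤ ∑ k, |u k| := Finset.sum_nonneg fun k _ => abs_nonneg _
  have hwk : ∀ k, |u k| ≤ ∑ k, |u k| := fun k =>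
    Finset.single_le_sum (fun k _ => abs_nonneg (u k)) (Finset.mem_univ k)
  have hA : (1:ℝ) ≤ (3 + 2*π) * (1 + ∑ k, |u k|) := by nlinarith
  have hd : ∀ t ∈ Metric.ball (u j) 1,
      (∀ k, HasDerivAt (fun s => Function.update u j s k)
        ((fun t k => if k = j then (1:ℝ) else 0) t k) t)
      ∧ HasDerivAt (fun _ => (1:ℝ)) ((fun _ => (0:ℝ)) t) t
      ∧ HasDerivAt (fun s => -(2*π)*s) ((fun _ => (-(2*π):ℝ)) t) t := by
    intro t _
    refine ⟨fun k => ?_, hasDerivAt_const _ _, ?_⟩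
    · by_cases hk : k = j
      · subst hk
        simp only [if_pos rfl, Function.update_self]
        exact hasDerivAt_id t
      · simp only [if_neg hk, Function.update_of_ne hk]
        exact hasDerivAt_const _ _
    · simpa using (hasDerivAt_id t).const_mul (-(2*π))
  have hbnd : ∀ t ∈ Metric.ball (u j) 1,
      (∀ k, |Function.update u j t k| ≤ (3 + 2*π) * (1 + ∑ k, |u k|) ∧
        |(fun t k => if k = j then (1:ℝ) else 0) t k| ≤ (3 + 2*π) * (1 + ∑ k, |u k|))
      ∧ |(1:ℝ)| ≤ 2 ∧ |(0:ℝ)| ≤ 2 ∧ (1:ℝ)/2 ≤ |(1:ℝ)| ∧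
        |(-(2*π))*t| ≤ (3 + 2*π) * (1 + ∑ k, |u k|) ∧
        |(-(2*π):ℝ)| ≤ (3 + 2*π) * (1 + ∑ k, |u k|) := by
    intro t ht
    rw [Metric.mem_ball, Real.dist_eq] at ht
    have htb : |t| ≤ |u j| + 1 := by
      have := abs_sub_abs_le_abs_sub t (u j)
      linarith
    refine ⟨fun k => ⟨?_, ?_⟩, by norm_num, by norm_num, by norm_num, ?_, ?_⟩
    · by_cases hk : k = j
      · subst hk
        rw [Function.update_self]
        nlinarith [hwk k, abs_nonneg (u k)]
      · rw [Function.update_of_ne hk]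
        nlinarith [hwk k, abs_nonneg (u k)]
    · by_cases hk : k = j <;> simp [hk] <;> nlinarith
    · rw [abs_mul, abs_neg]
      have : |(2*π)| = 2*π := abs_of_pos (by positivity)
      rw [this]
      nlinarith [hwk j, abs_nonneg (u j), abs_nonneg t]
    · rw [abs_neg, abs_of_pos (by positivity : (0:ℝ) < 2*π)]
      nlinarith
  have hβ : ∀ k : Fin r, |(fun k : Fin r => if k = j then 2*π else (0:ℝ)) k| ≤
      (3 + 2*π) * (1 + ∑ k, |u k|) := by
    intro k
    by_cases hk : k = j <;> simp [hk, abs_of_pos (by positivity : (0:ℝ) < 2*π)] <;> nlinarith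
  have h := key (sgn M) (sgn_meas M) (sgn_abs_le M)
    (fun t k => Function.update u j t k) (fun t k => if k = j then (1:ℝ) else 0)
    (fun _ => 1) (fun _ => 0) (fun s => -(2*π)*s) (fun _ => (-(2*π):ℝ))
    (fun k => if k = j then 2*π else (0:ℝ))
    (u j) 1 ((3 + 2*π) * (1 + ∑ k, |u k|)) one_pos hA hd hbnd hβ
  have hptw : ∀ x : Fin r → ℝ,
      ((-(2*π):ℝ) + (-(2*π)*(u j) + ∑ k, (if k = j then 2*π else (0:ℝ)) * x k) *
        (-π * ∑ k, 2 * (Function.update u j (u j) k - 1 * x k) *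
          ((if k = j then (1:ℝ) else 0) - 0 * x k))) *
        Real.exp (-π * ∑ k, (Function.update u j (u j) k - 1 * x k) ^ 2) * sgn M x
      = (-(2*π) + 4*π^2*(u j - x j)^2) * (Real.exp (-π * ∑ k, (u k - x k)^2) * sgn M x) := by
    intro x
    simp only [Function.update_eq_self, zero_mul, add_zero, one_mul, sub_zero,
      ite_mul, mul_ite, mul_one, mul_zero, zero_add, Finset.sum_ite_eq', Finset.mem_univ, if_true]
    ring
  have hfun : (fun t => ∫ x : Fin r → ℝ,
      (-(2*π)*t + ∑ k, (if k = j then 2*π else (0:ℝ)) * x k) *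
        Real.exp (-π * ∑ k, (Function.update u j t k - 1 * x k) ^ 2) * sgn M x)
      = fun t => pderiv j (Efun M) (Function.update u j t) := by
    funext t
    rw [pderiv_Efun M (Function.update u j t) j]
    congr 1
    funext x
    simp only [Function.update_self, one_mul, ite_mul, mul_ite, mul_zero, zero_mul,
      Finset.sum_ite_eq', Finset.mem_univ, if_true]
    ring
  constructor
  · exact h.1.congr (Filter.Eventually.of_forall hptw)
  · have h2 := h.2
    rw [show (∫ x : Fin r → ℝ,
        ((fun _ => (-(2*π):ℝ)) (u j) + ((fun s => -(2*π)*s) (u j) +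
          ∑ k, (fun k : Fin r => if k = j then 2*π else (0:ℝ)) k * x k) *
          (-π * ∑ k, 2 * ((fun t k => Function.update u j t k) (u j) k -
            (fun _ => (1:ℝ)) (u j) * x k) *
            ((fun t k => if k = j then (1:ℝ) else 0) (u j) k - (fun _ => (0:ℝ)) (u j) * x k))) *
          Real.exp (-π * ∑ k, ((fun t k => Function.update u j t k) (u j) k -
            (fun _ => (1:ℝ)) (u j) * x k) ^ 2) * sgn M x)
      = ∫ x : Fin r → ℝ, (-(2*π) + 4*π^2*(u j - x j)^2) *
          (Real.exp (-π * ∑ k, (u k - x k)^2) * sgn M x) from by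
        congr 1; funext x; exact hptw x] at h2
    have h3 : (fun t => ∫ x : Fin r → ℝ,
        ((fun s => -(2*π)*s) t + ∑ k, (fun k : Fin r => if k = j then 2*π else (0:ℝ)) k * x k) *
          Real.exp (-π * ∑ k, ((fun t k => Function.update u j t k) t k -
            (fun _ => (1:ℝ)) t * x k) ^ 2) * sgn M x)
        = fun t => pderiv j (Efun M) (Function.update u j t) := hfun
    rw [h3] at h2
    exact h2

lemma sqrt_bounds {s : ℝ} (hs : s ∈ Metric.ball (1:ℝ) (1/2)) :
    0 < s ∧ 1/2 ≤ Real.sqrt s ∧ Real.sqrt s ≤ 2 ∧ 1/(2*Real.sqrt s) ≤ 1 := by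
  rw [Metric.mem_ball, Real.dist_eq] at hs
  have h1 : 1/2 < s := by cases abs_lt.1 hs; linarith
  have h2 : s < 3/2 := by cases abs_lt.1 hs; linarith
  have hs0 : 0 < s := by linarith
  have hl : (1:ℝ)/2 ≤ Real.sqrt s := by
    have : Real.sqrt ((1/2)^2) ≤ Real.sqrt s := Real.sqrt_le_sqrt (by nlinarith)
    rwa [Real.sqrt_sq (by norm_num : (0:ℝ) ≤ 1/2)] at this
  have hu : Real.sqrt s ≤ 2 := by
    have : Real.sqrt s ≤ Real.sqrt (2^2) := Real.sqrt_le_sqrt (by nlinarith)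
    rwa [Real.sqrt_sq (by norm_num : (0:ℝ) ≤ 2)] at this
  refine ⟨hs0, hl, hu, ?_⟩
  rw [div_le_one (by linarith)]
  linarith

lemma hasDerivAt_Cfun {r : ℕ} (M : Matrix (Fin r) (Fin r) ℝ) (u : Fin r → ℝ) :
    Integrable (fun x : Fin r → ℝ =>
      (-π * ∑ k, (u k - x k)^2) * (Real.exp (-π * ∑ k, (u k - x k)^2) * sgn M x))
    ∧ HasDerivAt (fun s => ∫ x : Fin r → ℝ,
        Real.exp (-π * ∑ k, (Real.sqrt s * u k - Real.sqrt s * x k)^2) * sgn M x)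
      (∫ x : Fin r → ℝ, (-π * ∑ k, (u k - x k)^2) *
        (Real.exp (-π * ∑ k, (u k - x k)^2) * sgn M x)) 1 := by
  have pi_pos := Real.pi_pos
  have hSw : (0:ℝ) ≤ ∑ k, |u k| := Finset.sum_nonneg fun k _ => abs_nonneg _
  have hwk : ∀ k, |u k| ≤ ∑ k, |u k| := fun k =>
    Finset.single_le_sum (fun k _ => abs_nonneg (u k)) (Finset.mem_univ k)
  have hA : (1:ℝ) ≤ (3 + 2*π) * (1 + ∑ k, |u k|) := by nlinarith
  have hd : ∀ s ∈ Metric.ball (1:ℝ) (1/2),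
      (∀ k, HasDerivAt (fun s => Real.sqrt s * u k)
        ((fun s k => 1/(2*Real.sqrt s) * u k) s k) s)
      ∧ HasDerivAt Real.sqrt ((fun s => 1/(2*Real.sqrt s)) s) s
      ∧ HasDerivAt (fun _ => (1:ℝ)) ((fun _ => (0:ℝ)) s) s := by
    intro s hs
    obtain ⟨hs0, -, -, -⟩ := sqrt_bounds hs
    exact ⟨fun k => (Real.hasDerivAt_sqrt hs0.ne').mul_const (u k),
      Real.hasDerivAt_sqrt hs0.ne', hasDerivAt_const _ _⟩
  have hbnd : ∀ s ∈ Metric.ball (1:ℝ) (1/2),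
      (∀ k, |Real.sqrt s * u k| ≤ (3 + 2*π) * (1 + ∑ k, |u k|) ∧
        |1/(2*Real.sqrt s) * u k| ≤ (3 + 2*π) * (1 + ∑ k, |u k|))
      ∧ |Real.sqrt s| ≤ 2 ∧ |1/(2*Real.sqrt s)| ≤ 2 ∧ (1:ℝ)/2 ≤ |Real.sqrt s| ∧
        |(1:ℝ)| ≤ (3 + 2*π) * (1 + ∑ k, |u k|) ∧
        |(0:ℝ)| ≤ (3 + 2*π) * (1 + ∑ k, |u k|) := by
    intro s hs
    obtain ⟨hs0, hl, hu, hinv⟩ := sqrt_bounds hs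
    have hsq : (0:ℝ) ≤ Real.sqrt s := Real.sqrt_nonneg s
    have hinv0 : (0:ℝ) ≤ 1/(2*Real.sqrt s) := by positivity
    refine ⟨fun k => ⟨?_, ?_⟩, ?_, ?_, ?_, ?_, ?_⟩
    · rw [abs_mul, abs_of_nonneg hsq]
      nlinarith [hwk k, abs_nonneg (u k)]
    · rw [abs_mul, abs_of_nonneg hinv0]
      nlinarith [hwk k, abs_nonneg (u k)]
    · rw [abs_of_nonneg hsq]; exact hu
    · rw [abs_of_nonneg hinv0]; linarith
    · rw [abs_of_nonneg hsq]; exact hl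
    · rw [abs_one]; exact hA
    · rw [abs_zero]; linarith
  have hβ : ∀ k : Fin r, |(fun _ : Fin r => (0:ℝ)) k| ≤ (3 + 2*π) * (1 + ∑ k, |u k|) := by
    intro k; rw [abs_zero]; linarith
  have h := key (sgn M) (sgn_meas M) (sgn_abs_le M)
    (fun s k => Real.sqrt s * u k) (fun s k => 1/(2*Real.sqrt s) * u k)
    Real.sqrt (fun s => 1/(2*Real.sqrt s)) (fun _ => 1) (fun _ => 0) (fun _ => 0)
    1 (1/2) ((3 + 2*π) * (1 + ∑ k, |u k|)) (by norm_num) hA hd hbnd hβ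
  have hptw : ∀ x : Fin r → ℝ,
      ((0:ℝ) + ((1:ℝ) + ∑ k, (0:ℝ) * x k) *
        (-π * ∑ k, 2 * (Real.sqrt 1 * u k - Real.sqrt 1 * x k) *
          (1/(2*Real.sqrt 1) * u k - 1/(2*Real.sqrt 1) * x k))) *
        Real.exp (-π * ∑ k, (Real.sqrt 1 * u k - Real.sqrt 1 * x k) ^ 2) * sgn M x
      = (-π * ∑ k, (u k - x k)^2) * (Real.exp (-π * ∑ k, (u k - x k)^2) * sgn M x) := by
    intro x
    have e1 : (∑ k, 2 * (Real.sqrt 1 * u k - Real.sqrt 1 * x k) *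
        (1/(2*Real.sqrt 1) * u k - 1/(2*Real.sqrt 1) * x k)) = ∑ k, (u k - x k)^2 :=
      Finset.sum_congr rfl fun k _ => by rw [Real.sqrt_one]; ring
    have e2 : (∑ k, (Real.sqrt 1 * u k - Real.sqrt 1 * x k) ^ 2) = ∑ k, (u k - x k)^2 :=
      Finset.sum_congr rfl fun k _ => by rw [Real.sqrt_one]; ring
    rw [e1, e2]
    simp only [zero_mul, Finset.sum_const_zero, add_zero, one_mul, zero_add]
    ring
  constructor
  · exact h.1.congr (Filter.Eventually.of_forall hptw)
  · have h2 := h.2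
    rw [show (∫ x : Fin r → ℝ,
        ((0:ℝ) + ((1:ℝ) + ∑ k, (0:ℝ) * x k) *
          (-π * ∑ k, 2 * (Real.sqrt 1 * u k - Real.sqrt 1 * x k) *
            (1/(2*Real.sqrt 1) * u k - 1/(2*Real.sqrt 1) * x k))) *
          Real.exp (-π * ∑ k, (Real.sqrt 1 * u k - Real.sqrt 1 * x k) ^ 2) * sgn M x)
      = ∫ x : Fin r → ℝ, (-π * ∑ k, (u k - x k)^2) *
          (Real.exp (-π * ∑ k, (u k - x k)^2) * sgn M x) from by
        congr 1; funext x; exact hptw x] at h2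
    have h3 : (fun s => ∫ x : Fin r → ℝ,
        ((1:ℝ) + ∑ k, (0:ℝ) * x k) *
          Real.exp (-π * ∑ k, (Real.sqrt s * u k - Real.sqrt s * x k) ^ 2) * sgn M x)
        = fun s => ∫ x : Fin r → ℝ,
          Real.exp (-π * ∑ k, (Real.sqrt s * u k - Real.sqrt s * x k) ^ 2) * sgn M x := by
      funext s; congr 1; funext x
      simp only [zero_mul, Finset.sum_const_zero, add_zero, one_mul]
    rw [h3] at h2
    exact h2

lemma hasDerivAt_Bfun {r : ℕ} (M : Matrix (Fin r) (Fin r) ℝ) (u : Fin r → ℝ) :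
    HasDerivAt (fun s => ∫ x : Fin r → ℝ,
        Real.exp (-π * ∑ k, (Real.sqrt s * u k - x k)^2) * sgn M x)
      (∫ x : Fin r → ℝ, (-π * ∑ k, (u k - x k) * u k) *
        (Real.exp (-π * ∑ k, (u k - x k)^2) * sgn M x)) 1 := by
  have pi_pos := Real.pi_pos
  have hSw : (0:ℝ) ≤ ∑ k, |u k| := Finset.sum_nonneg fun k _ => abs_nonneg _
  have hwk : ∀ k, |u k| ≤ ∑ k, |u k| := fun k =>
    Finset.single_le_sum (fun k _ => abs_nonneg (u k)) (Finset.mem_univ k)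
  have hA : (1:ℝ) ≤ (3 + 2*π) * (1 + ∑ k, |u k|) := by nlinarith
  have hd : ∀ s ∈ Metric.ball (1:ℝ) (1/2),
      (∀ k, HasDerivAt (fun s => Real.sqrt s * u k)
        ((fun s k => 1/(2*Real.sqrt s) * u k) s k) s)
      ∧ HasDerivAt (fun _ => (1:ℝ)) ((fun _ => (0:ℝ)) s) s
      ∧ HasDerivAt (fun _ => (1:ℝ)) ((fun _ => (0:ℝ)) s) s := by
    intro s hs
    obtain ⟨hs0, -, -, -⟩ := sqrt_bounds hs
    exact ⟨fun k => (Real.hasDerivAt_sqrt hs0.ne').mul_const (u k),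
      hasDerivAt_const _ _, hasDerivAt_const _ _⟩
  have hbnd : ∀ s ∈ Metric.ball (1:ℝ) (1/2),
      (∀ k, |Real.sqrt s * u k| ≤ (3 + 2*π) * (1 + ∑ k, |u k|) ∧
        |1/(2*Real.sqrt s) * u k| ≤ (3 + 2*π) * (1 + ∑ k, |u k|))
      ∧ |(1:ℝ)| ≤ 2 ∧ |(0:ℝ)| ≤ 2 ∧ (1:ℝ)/2 ≤ |(1:ℝ)| ∧
        |(1:ℝ)| ≤ (3 + 2*π) * (1 + ∑ k, |u k|) ∧
        |(0:ℝ)| ≤ (3 + 2*π) * (1 + ∑ k, |u k|) := by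
    intro s hs
    obtain ⟨hs0, hl, hu, hinv⟩ := sqrt_bounds hs
    have hsq : (0:ℝ) ≤ Real.sqrt s := Real.sqrt_nonneg s
    have hinv0 : (0:ℝ) ≤ 1/(2*Real.sqrt s) := by positivity
    refine ⟨fun k => ⟨?_, ?_⟩, by norm_num, by norm_num, by norm_num,
      by rw [abs_one]; exact hA, by rw [abs_zero]; linarith⟩
    · rw [abs_mul, abs_of_nonneg hsq]
      nlinarith [hwk k, abs_nonneg (u k)]
    · rw [abs_mul, abs_of_nonneg hinv0]
      nlinarith [hwk k, abs_nonneg (u k)]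
  have hβ : ∀ k : Fin r, |(fun _ : Fin r => (0:ℝ)) k| ≤ (3 + 2*π) * (1 + ∑ k, |u k|) := by
    intro k; rw [abs_zero]; linarith
  have h := key (sgn M) (sgn_meas M) (sgn_abs_le M)
    (fun s k => Real.sqrt s * u k) (fun s k => 1/(2*Real.sqrt s) * u k)
    (fun _ => 1) (fun _ => 0) (fun _ => 1) (fun _ => 0) (fun _ => 0)
    1 (1/2) ((3 + 2*π) * (1 + ∑ k, |u k|)) (by norm_num) hA hd hbnd hβ
  have hptw : ∀ x : Fin r → ℝ,
      ((0:ℝ) + ((1:ℝ) + ∑ k, (0:ℝ) * x k) *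
        (-π * ∑ k, 2 * (Real.sqrt 1 * u k - 1 * x k) *
          (1/(2*Real.sqrt 1) * u k - 0 * x k))) *
        Real.exp (-π * ∑ k, (Real.sqrt 1 * u k - 1 * x k) ^ 2) * sgn M x
      = (-π * ∑ k, (u k - x k) * u k) * (Real.exp (-π * ∑ k, (u k - x k)^2) * sgn M x) := by
    intro x
    have e1 : (∑ k, 2 * (Real.sqrt 1 * u k - 1 * x k) *
        (1/(2*Real.sqrt 1) * u k - 0 * x k)) = ∑ k, (u k - x k) * u k :=
      Finset.sum_congr rfl fun k _ => by rw [Real.sqrt_one]; ring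
    have e2 : (∑ k, (Real.sqrt 1 * u k - 1 * x k) ^ 2) = ∑ k, (u k - x k)^2 :=
      Finset.sum_congr rfl fun k _ => by rw [Real.sqrt_one]; ring
    rw [e1, e2]
    simp only [zero_mul, Finset.sum_const_zero, add_zero, one_mul, zero_add]
    ring
  have h2 := h.2
  rw [show (∫ x : Fin r → ℝ,
      ((0:ℝ) + ((1:ℝ) + ∑ k, (0:ℝ) * x k) *
        (-π * ∑ k, 2 * (Real.sqrt 1 * u k - 1 * x k) *
          (1/(2*Real.sqrt 1) * u k - 0 * x k))) *
        Real.exp (-π * ∑ k, (Real.sqrt 1 * u k - 1 * x k) ^ 2) * sgn M x)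
    = ∫ x : Fin r → ℝ, (-π * ∑ k, (u k - x k) * u k) *
        (Real.exp (-π * ∑ k, (u k - x k)^2) * sgn M x) from by
      congr 1; funext x; exact hptw x] at h2
  have h3 : (fun s => ∫ x : Fin r → ℝ,
      ((1:ℝ) + ∑ k, (0:ℝ) * x k) *
        Real.exp (-π * ∑ k, (Real.sqrt s * u k - 1 * x k) ^ 2) * sgn M x)
      = fun s => ∫ x : Fin r → ℝ,
        Real.exp (-π * ∑ k, (Real.sqrt s * u k - x k) ^ 2) * sgn M x := by
    funext s; congr 1; funext x
    simp only [zero_mul, Finset.sum_const_zero, add_zero, one_mul]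
  rw [h3] at h2
  exact h2

lemma scaling {r : ℕ} (M : Matrix (Fin r) (Fin r) ℝ) (u : Fin r → ℝ) {s : ℝ} (hs : 0 < s) :
    (∫ x : Fin r → ℝ, Real.exp (-π * ∑ k, (Real.sqrt s * u k - x k)^2) * sgn M x)
      = (Real.sqrt s)^r * ∫ x : Fin r → ℝ,
          Real.exp (-π * ∑ k, (Real.sqrt s * u k - Real.sqrt s * x k)^2) * sgn M x := by
  have hss : 0 < Real.sqrt s := Real.sqrt_pos.2 hs
  have h := MeasureTheory.Measure.integral_comp_smul (volume)
    (fun x : Fin r → ℝ => Real.exp (-π * ∑ k, (Real.sqrt s * u k - x k)^2) * sgn M x)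
    (Real.sqrt s)
  rw [Module.finrank_fintype_fun_eq_card, Fintype.card_fin] at h
  have hl : (fun x : Fin r → ℝ =>
      Real.exp (-π * ∑ k, (Real.sqrt s * u k - (Real.sqrt s • x) k)^2) * sgn M (Real.sqrt s • x))
      = fun x : Fin r → ℝ =>
        Real.exp (-π * ∑ k, (Real.sqrt s * u k - Real.sqrt s * x k)^2) * sgn M x := by
    funext x
    rw [sgn_smul M hss]
    simp only [Pi.smul_apply, smul_eq_mul]
  rw [hl] at h
  rw [h, smul_eq_mul, abs_of_pos (by positivity : (0:ℝ) < ((Real.sqrt s)^r)⁻¹)]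
  field_simp

/-- `E_r` satisfies the Vignéras equation with `λ = 0`:
`∑ⱼ (∂²ⱼ + 2π uⱼ ∂ⱼ) E_r(𝓜; u) = 0`. -/
theorem stmt_12 {r : ℕ} (M : Matrix (Fin r) (Fin r) ℝ) (hM : IsUnit M.det)
    (u : Fin r → ℝ) :
    ∑ j, (pderiv j (pderiv j (Efun M)) u + 2 * Real.pi * u j * pderiv j (Efun M) u)
      = 0 := by
  have pi_pos := Real.pi_pos
  have hne : (-(2*π) : ℝ) ≠ 0 := by nlinarith
  have hne4 : ((4:ℝ)*π^2) ≠ 0 := by positivity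
  -- integrability of the basic integrand
  have hGmeas : AEStronglyMeasurable
      (fun x : Fin r → ℝ => Real.exp (-π * ∑ k, (u k - x k)^2) * sgn M x) volume := by
    apply Measurable.aestronglyMeasurable
    exact (Real.measurable_exp.comp
      ((Finset.measurable_sum _ fun k _ =>
        (measurable_const.sub (measurable_pi_apply k)).pow_const 2).const_mul (-π))).mul
      (sgn_meas M)
  have hGi : Integrable (fun x : Fin r → ℝ =>
      Real.exp (-π * ∑ k, (u k - x k)^2) * sgn M x) := by
    apply Integrable.mono' (integrable_gauss pi_pos u) hGmeas
    filter_upwards with x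
    rw [Real.norm_eq_abs, abs_mul, Real.abs_exp]
    exact mul_le_of_le_one_right (Real.exp_pos _).le (sgn_abs_le M x)
  -- integrability of first-moment integrands
  have hP1i : ∀ j, Integrable (fun x : Fin r → ℝ =>
      (u j - x j) * (Real.exp (-π * ∑ k, (u k - x k)^2) * sgn M x)) := by
    intro j
    have h := (hasDerivAt_Efun M u j).1.const_mul (-(2*π))⁻¹
    apply h.congr
    filter_upwards with x
    field_simp
  -- integrability of second-moment integrands
  have hP2i : ∀ j, Integrable (fun x : Fin r → ℝ =>
      (u j - x j)^2 * (Real.exp (-π * ∑ k, (u k - x k)^2) * sgn M x)) := by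
    intro j
    have h := (((hasDerivAt2_Efun M u j).1.add (hGi.const_mul (2*π))).const_mul ((4*π^2)⁻¹))
    apply h.congr
    filter_upwards with x
    simp only [Pi.add_apply]
    field_simp
    ring
  -- first derivative values
  have hd1 : ∀ j, pderiv j (Efun M) u = -(2*π) *
      (∫ x : Fin r → ℝ, (u j - x j) * (Real.exp (-π * ∑ k, (u k - x k)^2) * sgn M x)) := by
    intro j
    rw [pderiv_Efun M u j]
    rw [show (fun x : Fin r → ℝ => (-(2*π) * (u j - x j)) *
        (Real.exp (-π * ∑ k, (u k - x k)^2) * sgn M x))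
      = fun x : Fin r → ℝ => (-(2*π)) * ((u j - x j) *
        (Real.exp (-π * ∑ k, (u k - x k)^2) * sgn M x)) from by funext x; ring]
    exact integral_const_mul _ _
  -- second derivative values
  have hd2 : ∀ j, pderiv j (pderiv j (Efun M)) u = -(2*π) *
      (∫ x : Fin r → ℝ, Real.exp (-π * ∑ k, (u k - x k)^2) * sgn M x) + 4*π^2 *
      (∫ x : Fin r → ℝ, (u j - x j)^2 * (Real.exp (-π * ∑ k, (u k - x k)^2) * sgn M x)) := by
    intro j
    have h := (hasDerivAt2_Efun M u j).2
    rw [show pderiv j (pderiv j (Efun M)) u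
      = deriv (fun t => pderiv j (Efun M) (Function.update u j t)) (u j) from rfl, h.deriv]
    rw [show (fun x : Fin r → ℝ => (-(2*π) + 4*π^2*(u j - x j)^2) *
        (Real.exp (-π * ∑ k, (u k - x k)^2) * sgn M x))
      = fun x : Fin r → ℝ => (-(2*π)) * (Real.exp (-π * ∑ k, (u k - x k)^2) * sgn M x)
        + (4*π^2) * ((u j - x j)^2 * (Real.exp (-π * ∑ k, (u k - x k)^2) * sgn M x)) from by
          funext x; ring]
    rw [integral_add (hGi.const_mul _) ((hP2i j).const_mul _), integral_const_mul _ _,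
      integral_const_mul _ _]
  -- the two s-derivatives
  have hC := (hasDerivAt_Cfun M u).2
  have hB := hasDerivAt_Bfun M u
  rw [show (∫ x : Fin r → ℝ, (-π * ∑ k, (u k - x k)^2) *
      (Real.exp (-π * ∑ k, (u k - x k)^2) * sgn M x))
    = -π * ∫ x : Fin r → ℝ, (∑ k, (u k - x k)^2) *
      (Real.exp (-π * ∑ k, (u k - x k)^2) * sgn M x) from by
      rw [← integral_const_mul _ _]; congr 1; funext x; ring] at hC
  rw [show (∫ x : Fin r → ℝ, (-π * ∑ k, (u k - x k) * u k) *
      (Real.exp (-π * ∑ k, (u k - x k)^2) * sgn M x))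
    = -π * ∫ x : Fin r → ℝ, (∑ k, (u k - x k) * u k) *
      (Real.exp (-π * ∑ k, (u k - x k)^2) * sgn M x) from by
      rw [← integral_const_mul _ _]; congr 1; funext x; ring] at hB
  -- the product function
  have hpow : HasDerivAt (fun s => (Real.sqrt s)^r) ((r:ℝ)/2) 1 := by
    have h := (Real.hasDerivAt_sqrt one_ne_zero).fun_pow r
    refine h.congr_deriv ?_
    rw [Real.sqrt_one, one_pow]
    ring
  have hprod := hpow.mul hC
  -- C at 1 is the base integral
  have hC1 : (∫ x : Fin r → ℝ,
      Real.exp (-π * ∑ k, (Real.sqrt 1 * u k - Real.sqrt 1 * x k)^2) * sgn M x)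
      = ∫ x : Fin r → ℝ, Real.exp (-π * ∑ k, (u k - x k)^2) * sgn M x := by
    congr 1; funext x
    have e : (∑ k, (Real.sqrt 1 * u k - Real.sqrt 1 * x k)^2) = ∑ k, (u k - x k)^2 :=
      Finset.sum_congr rfl fun k _ => by rw [Real.sqrt_one]; ring
    rw [e]
  rw [hC1] at hprod
  -- B agrees with the product near 1
  have heq : (fun s => ∫ x : Fin r → ℝ,
      Real.exp (-π * ∑ k, (Real.sqrt s * u k - x k)^2) * sgn M x)
      =ᶠ[nhds 1] fun s => (Real.sqrt s)^r * ∫ x : Fin r → ℝ,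
        Real.exp (-π * ∑ k, (Real.sqrt s * u k - Real.sqrt s * x k)^2) * sgn M x := by
    filter_upwards [eventually_gt_nhds zero_lt_one] with s hs
    exact scaling M u hs
  have hB2 := hprod.congr_of_eventuallyEq heq
  have huniq := hB.unique hB2
  rw [Real.sqrt_one, one_pow] at huniq
  -- expand the two auxiliary integrals as sums
  have hQ : (∫ x : Fin r → ℝ, (∑ k, (u k - x k)^2) *
      (Real.exp (-π * ∑ k, (u k - x k)^2) * sgn M x))
      = ∑ j, ∫ x : Fin r → ℝ, (u j - x j)^2 *
        (Real.exp (-π * ∑ k, (u k - x k)^2) * sgn M x) := by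
    rw [show (fun x : Fin r → ℝ => (∑ k, (u k - x k)^2) *
        (Real.exp (-π * ∑ k, (u k - x k)^2) * sgn M x))
      = fun x : Fin r → ℝ => ∑ k, (u k - x k)^2 *
        (Real.exp (-π * ∑ k, (u k - x k)^2) * sgn M x) from by
        funext x; rw [Finset.sum_mul]]
    exact integral_finset_sum _ fun k _ => hP2i k
  have hL : (∫ x : Fin r → ℝ, (∑ k, (u k - x k) * u k) *
      (Real.exp (-π * ∑ k, (u k - x k)^2) * sgn M x))
      = ∑ j, u j * ∫ x : Fin r → ℝ, (u j - x j) *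
        (Real.exp (-π * ∑ k, (u k - x k)^2) * sgn M x) := by
    rw [show (fun x : Fin r → ℝ => (∑ k, (u k - x k) * u k) *
        (Real.exp (-π * ∑ k, (u k - x k)^2) * sgn M x))
      = fun x : Fin r → ℝ => ∑ k, u k * ((u k - x k) *
        (Real.exp (-π * ∑ k, (u k - x k)^2) * sgn M x)) from by
        funext x; rw [Finset.sum_mul]; exact Finset.sum_congr rfl fun k _ => by ring]
    rw [integral_finset_sum _ fun k _ => (hP1i k).const_mul (u k)]
    exact Finset.sum_congr rfl fun k _ => integral_const_mul _ _
  rw [hQ, hL] at huniq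
  -- final computation
  calc ∑ j, (pderiv j (pderiv j (Efun M)) u + 2 * π * u j * pderiv j (Efun M) u)
      = ∑ j : Fin r, ((-(2*π) *
          (∫ x : Fin r → ℝ, Real.exp (-π * ∑ k, (u k - x k)^2) * sgn M x))
        + (4*π^2 * (∫ x : Fin r → ℝ, (u j - x j)^2 *
            (Real.exp (-π * ∑ k, (u k - x k)^2) * sgn M x))
          + (-(4*π^2)) * (u j * ∫ x : Fin r → ℝ, (u j - x j) *
            (Real.exp (-π * ∑ k, (u k - x k)^2) * sgn M x)))) := by
        refine Finset.sum_congr rfl fun j _ => ?_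
        rw [hd1 j, hd2 j]
        ring
    _ = (r:ℝ) * (-(2*π) *
          (∫ x : Fin r → ℝ, Real.exp (-π * ∑ k, (u k - x k)^2) * sgn M x))
        + (4*π^2 * ∑ j, (∫ x : Fin r → ℝ, (u j - x j)^2 *
            (Real.exp (-π * ∑ k, (u k - x k)^2) * sgn M x))
          + (-(4*π^2)) * ∑ j, (u j * ∫ x : Fin r → ℝ, (u j - x j) *
            (Real.exp (-π * ∑ k, (u k - x k)^2) * sgn M x))) := by
        rw [Finset.sum_add_distrib, Finset.sum_add_distrib, Finset.sum_const,
          Finset.card_univ, Fintype.card_fin, ← Finset.mul_sum, ← Finset.mul_sum,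
          nsmul_eq_mul]
    _ = 0 := by linear_combination (4*π) * huniq
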